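/- Minimality of the side length: let a, b, c, d be integers with d ≥ 1, gcd(a,b,c) = 1 and a² + b² + c² = 3d². If O = (0,0,0), A, B are three points of ℤ³ forming an equilateral triangle and lying in the plane ax + by + cz = 0, then the squared side length of the triangle is at least 2d². -/

import Mathlib

/-- Dot product of integer vectors in `ℤ³`. -/
def dot3 (u v : Fin 3 → ℤ) : ℤ := ∑ i, u i * v i

/-- Squared Euclidean distance between two points of `ℤ³`. -/
def distSq (u v : Fin 3 → ℤ) : ℤ := dot3 (u - v) (u - v)

/-- Key divisibility lemma, by induction on `f`. -/
private lemma key : ∀ f : ℕ, ∀ a b c d x y z p : ℤ, Prime p →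
    a ^ 2 + b ^ 2 + c ^ 2 = 3 * d ^ 2 → ¬(p ∣ a ∧ p ∣ b ∧ p ∣ c) →
    p ^ f ∣ d → p ^ f ∣ b * z - c * y → p ^ f ∣ c * x - a * z → p ^ f ∣ a * y - b * x →
    p ^ (2 * f) ∣ a * x + b * y + c * z →
    p ^ (2 * f) ∣ x ^ 2 + y ^ 2 + z ^ 2 := by
  intro f
  induction f with
  | zero => intro a b c d x y z p _ _ _ _ _ _ _ _; simpa using (one_dvd _)
  | succ f ih =>
    -- first handle the case where `p ∤ a`; the other cases follow by cyclic permutation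
    have step : ∀ a b c d x y z p : ℤ, Prime p →
        a ^ 2 + b ^ 2 + c ^ 2 = 3 * d ^ 2 → ¬(p ∣ a ∧ p ∣ b ∧ p ∣ c) → ¬ p ∣ a →
        p ^ (f+1) ∣ d → p ^ (f+1) ∣ b * z - c * y → p ^ (f+1) ∣ c * x - a * z →
        p ^ (f+1) ∣ a * y - b * x → p ^ (2 * (f+1)) ∣ a * x + b * y + c * z →
        p ^ (2 * (f+1)) ∣ x ^ 2 + y ^ 2 + z ^ 2 := by
      intro a b c d x y z p hp habc hg hpa hdd h1 h2 h3 h4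
      have hpne : p ≠ 0 := hp.ne_zero
      obtain ⟨u, v, huv⟩ := (hp.coprime_iff_not_dvd).mpr hpa
      obtain ⟨l, hl⟩ : ∃ l : ℤ, l = v * x := ⟨_, rfl⟩
      -- p divides x - l*a, y - l*b, z - l*c
      have hx : p ∣ x - l * a := ⟨x * u, by linear_combination (-x) * huv - a * hl⟩
      obtain ⟨m3', hm3'⟩ : p ∣ a * y - b * x := dvd_trans (dvd_pow_self p (Nat.succ_ne_zero f)) h3
      obtain ⟨m2', hm2'⟩ : p ∣ c * x - a * z := dvd_trans (dvd_pow_self p (Nat.succ_ne_zero f)) h2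
      have hy : p ∣ y - l * b := by
        have h := (hp.dvd_mul.mp (⟨m3' + b * x * u, by
          linear_combination hm3' - b * x * huv - a * b * hl⟩ : p ∣ a * (y - l * b)))
        exact h.resolve_left hpa
      have hz : p ∣ z - l * c := by
        have h := (hp.dvd_mul.mp (⟨-m2' + c * x * u, by linear_combination -hm2' - c * x * huv - a * c * hl⟩ :
          p ∣ a * (z - l * c)))
        exact h.resolve_left hpa
      obtain ⟨x₁, hx₁⟩ := hx
      obtain ⟨y₁, hy₁⟩ := hy
      obtain ⟨z₁, hz₁⟩ := hz
      obtain ⟨e, hde⟩ := hdd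
      obtain ⟨m1, hm1⟩ := h1
      obtain ⟨m2, hm2⟩ := h2
      obtain ⟨m3, hm3⟩ := h3
      obtain ⟨s, hs⟩ := h4
      have h1' : p ^ f ∣ b * z₁ - c * y₁ :=
        ⟨m1, mul_left_cancel₀ hpne (by linear_combination hm1 - b * hz₁ + c * hy₁)⟩
      have h2' : p ^ f ∣ c * x₁ - a * z₁ :=
        ⟨m2, mul_left_cancel₀ hpne (by linear_combination hm2 - c * hx₁ + a * hz₁)⟩
      have h3' : p ^ f ∣ a * y₁ - b * x₁ :=
        ⟨m3, mul_left_cancel₀ hpne (by linear_combination hm3 - a * hy₁ + b * hx₁)⟩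
      have hd' : p ^ f ∣ d := dvd_trans (pow_dvd_pow p (Nat.le_succ f)) ⟨e, hde⟩
      have hT : a * x₁ + b * y₁ + c * z₁ = p ^ (2 * f) * (p * (s - 3 * l * e ^ 2)) :=
        mul_left_cancel₀ hpne (by
          linear_combination hs - a * hx₁ - b * hy₁ - c * hz₁ - l * habc
            - 3 * l * (d + p ^ (f+1) * e) * hde)
      obtain ⟨q, hq⟩ := ih a b c d x₁ y₁ z₁ p hp habc hg hd' h1' h2' h3' ⟨_, hT⟩
      refine ⟨2 * l * s - 3 * l ^ 2 * e ^ 2 + q, ?_⟩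
      have hX : x = l * a + p * x₁ := by linarith [hx₁]
      have hY : y = l * b + p * y₁ := by linarith [hy₁]
      have hZ : z = l * c + p * z₁ := by linarith [hz₁]
      rw [hX, hY, hZ]
      linear_combination l ^ 2 * habc + 2 * l * p * hT + p ^ 2 * hq
        + 3 * l ^ 2 * (d + p ^ (f+1) * e) * hde
    intro a b c d x y z p hp habc hg hdd h1 h2 h3 h4
    by_cases hpa : p ∣ a
    · by_cases hpb : p ∣ b
      · have hpc : ¬ p ∣ c := fun hpc => hg ⟨hpa, hpb, hpc⟩
        have := step c a b d z x y p hp (by linear_combination habc)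
          (fun ⟨h1, h2, h3⟩ => hg ⟨h2, h3, h1⟩) hpc hdd h3 h1 h2
          (by rwa [show c*z + a*x + b*y = a*x + b*y + c*z by ring])
        rwa [show z^2 + x^2 + y^2 = x^2 + y^2 + z^2 by ring] at this
      · have := step b c a d y z x p hp (by linear_combination habc)
          (fun ⟨h1, h2, h3⟩ => hg ⟨h3, h1, h2⟩) hpb hdd h2 h3 h1
          (by rwa [show b*y + c*z + a*x = a*x + b*y + c*z by ring])
        rwa [show y^2 + z^2 + x^2 = x^2 + y^2 + z^2 by ring] at this
    · exact step a b c d x y z p hp habc hg hpa hdd h1 h2 h3 h4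


private lemma crossDvd (a b c d x1 y1 z1 x2 y2 z2 n m : ℤ) (hd : 0 < d)
    (habc : a ^ 2 + b ^ 2 + c ^ 2 = 3 * d ^ 2)
    (hA : a * x1 + b * y1 + c * z1 = 0) (hB : a * x2 + b * y2 + c * z2 = 0)
    (e1 : x1 ^ 2 + y1 ^ 2 + z1 ^ 2 = n) (e2 : x2 ^ 2 + y2 ^ 2 + z2 ^ 2 = n)
    (hm : x1 * x2 + y1 * y2 + z1 * z2 = m) (hnm : n = 2 * m) (hnpos : 0 < n) :
    d ∣ b * z1 - c * y1 ∧ d ∣ c * x1 - a * z1 ∧ d ∣ a * y1 - b * x1 := by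
  have core : ∀ r pp : ℤ, r ≠ 0 →
      r * (y1 * z2 - z1 * y2) = pp * a → r * (z1 * x2 - x1 * z2) = pp * b →
      r * (x1 * y2 - y1 * x2) = pp * c →
      d ∣ b * z1 - c * y1 ∧ d ∣ c * x1 - a * z1 ∧ d ∣ a * y1 - b * x1 := by
    intro r pp hr hc1 hc2 hc3
    have hCsq : (y1*z2 - z1*y2)^2 + (z1*x2 - x1*z2)^2 + (x1*y2 - y1*x2)^2 = 3 * m^2 := by
      linear_combination (x2^2 + y2^2 + z2^2) * e1 + n * e2
        - (x1*x2 + y1*y2 + z1*z2 + m) * hm + (n + 2*m) * hnm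
    have hsq3 : 3 * (r*m)^2 = 3 * (pp*d)^2 := by
      linear_combination (r*(y1*z2 - z1*y2) + pp*a) * hc1 + (r*(z1*x2 - x1*z2) + pp*b) * hc2
        + (r*(x1*y2 - y1*x2) + pp*c) * hc3 - r^2 * hCsq + pp^2 * habc
    have hsq : (r*m - pp*d) * (r*m + pp*d) = 0 := by linarith [hsq3]; 
    have hε : ∃ ε : ℤ, (ε = 1 ∨ ε = -1) ∧ r * m = ε * (pp * d) := by
      rcases mul_eq_zero.mp hsq with h | h
      · exact ⟨1, Or.inl rfl, by linarith⟩
      · exact ⟨-1, Or.inr rfl, by linarith⟩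
    obtain ⟨ε, hε1, hεm⟩ := hε
    have hpp : pp ≠ 0 := by
      intro h0
      rw [h0] at hεm
      have hm0 : m = 0 := by
        rcases mul_eq_zero.mp (by linarith [hεm] : r * m = 0) with h | h
        · exact absurd h hr
        · exact h
      rw [hm0] at hnm; omega
    have k1 : b * z1 - c * y1 = ε * d * (2 * x2 - x1) :=
      mul_left_cancel₀ hpp (by
        linear_combination (-z1) * hc2 + y1 * hc3 + r * x2 * e1 - r * x1 * hm
          + r * x2 * hnm + (2 * x2 - x1) * hεm)
    have k2 : c * x1 - a * z1 = ε * d * (2 * y2 - y1) :=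
      mul_left_cancel₀ hpp (by
        linear_combination (-x1) * hc3 + z1 * hc1 + r * y2 * e1 - r * y1 * hm
          + r * y2 * hnm + (2 * y2 - y1) * hεm)
    have k3 : a * y1 - b * x1 = ε * d * (2 * z2 - z1) :=
      mul_left_cancel₀ hpp (by
        linear_combination (-y1) * hc1 + x1 * hc2 + r * z2 * e1 - r * z1 * hm
          + r * z2 * hnm + (2 * z2 - z1) * hεm)
    exact ⟨⟨ε * (2*x2 - x1), by linear_combination k1⟩,
      ⟨ε * (2*y2 - y1), by linear_combination k2⟩,
      ⟨ε * (2*z2 - z1), by linear_combination k3⟩⟩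
  by_cases ha : a = 0
  · by_cases hb : b = 0
    · have hc : c ≠ 0 := by
        intro hc; rw [ha, hb, hc] at habc; nlinarith
      exact core c (x1*y2 - y1*x2) hc
        (by linear_combination y1 * hB - y2 * hA) (by linear_combination x2 * hA - x1 * hB)
        (by ring)
    · exact core b (z1*x2 - x1*z2) hb
        (by linear_combination z2 * hA - z1 * hB) (by ring)
        (by linear_combination x1 * hB - x2 * hA)
  · exact core a (y1*z2 - z1*y2) ha (by ring)
      (by linear_combination z1 * hB - z2 * hA) (by linear_combination y2 * hA - y1 * hB)



private lemma combine (a b c d n x y z : ℤ) (hdpos : 0 < d)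
    (keyH : ∀ (p : ℤ), Prime p → ∀ f : ℕ, p ^ f ∣ d → p ^ f ∣ b * z - c * y →
      p ^ f ∣ c * x - a * z → p ^ f ∣ a * y - b * x → p ^ (2*f) ∣ a*x + b*y + c*z →
      p ^ (2*f) ∣ x^2 + y^2 + z^2)
    (hn : x ^ 2 + y ^ 2 + z ^ 2 = n) (hnpos : 0 < n)
    (hc1 : d ∣ b * z - c * y) (hc2 : d ∣ c * x - a * z) (hc3 : d ∣ a * y - b * x)
    (hdot : a * x + b * y + c * z = 0) : d ^ 2 ∣ n := by
  have hnne : n.natAbs ≠ 0 := by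
    simp only [ne_eq, Int.natAbs_eq_zero]; omega
  have hd0 : d ≠ 0 := by omega
  · rw [← Int.natAbs_dvd_natAbs, Int.natAbs_pow]
    rw [← Nat.factorization_le_iff_dvd (by simpa using hd0) hnne]
    rw [Finsupp.le_iff]
    intro p hps
    by_cases hp : p.Prime
    · rw [Nat.factorization_pow]
      simp only [Finsupp.smul_apply, smul_eq_mul]
      set f := d.natAbs.factorization p with hf
      have hpdvd : (p : ℤ) ^ f ∣ d := by
        rw [← Int.natAbs_dvd_natAbs, Int.natAbs_pow, Int.natAbs_natCast]
        exact Nat.ordProj_dvd _ _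
      have hpp : Prime (p : ℤ) := Nat.prime_iff_prime_int.mp hp
      have h := keyH (p : ℤ) hpp f hpdvd (dvd_trans hpdvd hc1) (dvd_trans hpdvd hc2)
        (dvd_trans hpdvd hc3) (by rw [hdot]; exact dvd_zero _)
      rw [hn] at h
      have : p ^ (2 * f) ∣ n.natAbs := by
        rw [← Int.natAbs_dvd_natAbs, Int.natAbs_pow, Int.natAbs_natCast] at h
        exact h
      exact (hp.pow_dvd_iff_le_factorization hnne).mp this
    · exfalso
      simp only [Nat.support_factorization, Nat.mem_primeFactors] at hps
      exact hp hps.1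


private lemma even_of_zmod4 (t : ℤ) (h : (t : ZMod 4) = 0 ∨ (t : ZMod 4) = 2) : 2 ∣ t := by
  rcases h with h | h
  · have h4 : (4 : ℤ) ∣ t := (ZMod.intCast_zmod_eq_zero_iff_dvd t 4).mp h
    omega
  · have : ((t - 2 : ℤ) : ZMod 4) = 0 := by push_cast; rw [h]; ring
    have h4 : (4 : ℤ) ∣ t - 2 := (ZMod.intCast_zmod_eq_zero_iff_dvd _ 4).mp this
    omega

private lemma d_odd (a b c d : ℤ)
    (hgcd : Int.gcd (Int.gcd a b) c = 1) (habc : a ^ 2 + b ^ 2 + c ^ 2 = 3 * d ^ 2) :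
    ¬ (2:ℤ) ∣ d := by
  rintro ⟨e, hde⟩
  have h4 : ((a : ZMod 4))^2 + ((b : ZMod 4))^2 + ((c : ZMod 4))^2
      = 3 * (2 * (e : ZMod 4))^2 := by
    have h := congrArg (Int.cast : ℤ → ZMod 4) habc
    rw [hde] at h
    push_cast at h
    linear_combination h
  have dec : ∀ x y z w : ZMod 4, x^2 + y^2 + z^2 = 3 * (2*w)^2 →
      (x = 0 ∨ x = 2) ∧ (y = 0 ∨ y = 2) ∧ (z = 0 ∨ z = 2) := by decide
  obtain ⟨ha, hb, hc⟩ := dec _ _ _ _ h4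
  have h2a : (2:ℤ) ∣ a := even_of_zmod4 a ha
  have h2b : (2:ℤ) ∣ b := even_of_zmod4 b hb
  have h2c : (2:ℤ) ∣ c := even_of_zmod4 c hc
  have hg1 : (2:ℤ) ∣ (Int.gcd a b : ℤ) := Int.dvd_coe_gcd h2a h2b
  have hg2 : (2:ℤ) ∣ (Int.gcd (Int.gcd a b) c : ℤ) := Int.dvd_coe_gcd hg1 h2c
  rw [hgcd] at hg2
  norm_num at hg2


/-- Minimality of the side length: an equilateral triangle `O = (0,0,0), A, B` in `ℤ³`
lying in the plane `ax + by + cz = 0`, where `a² + b² + c² = 3d²`, `gcd(a,b,c) = 1` and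
`d ≥ 1`, has squared side length at least `2d²`. -/
theorem equilateralTriangle_sideSq_ge (a b c d : ℤ) (hd : 1 ≤ d)
    (hgcd : Int.gcd (Int.gcd a b) c = 1) (habc : a ^ 2 + b ^ 2 + c ^ 2 = 3 * d ^ 2)
    (A B : Fin 3 → ℤ) (hOA : A ≠ 0) (hOB : B ≠ 0) (hAB : A ≠ B)
    (h₁ : distSq 0 A = distSq A B) (h₂ : distSq 0 B = distSq A B)
    (hplaneA : a * A 0 + b * A 1 + c * A 2 = 0)
    (hplaneB : a * B 0 + b * B 1 + c * B 2 = 0) :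
    2 * d ^ 2 ≤ distSq A B := by
  have hdpos : (0:ℤ) < d := hd
  obtain ⟨n, hndef⟩ : ∃ n : ℤ, distSq A B = n := ⟨_, rfl⟩
  rw [hndef] at h₁ h₂ ⊢
  have e3 : (A 0 - B 0) ^ 2 + (A 1 - B 1) ^ 2 + (A 2 - B 2) ^ 2 = n := by
    rw [← hndef]
    simp only [distSq, dot3, Fin.sum_univ_three, Pi.sub_apply]
    ring
  have e1 : A 0 ^ 2 + A 1 ^ 2 + A 2 ^ 2 = n := by
    rw [← h₁]
    simp only [distSq, dot3, Fin.sum_univ_three, Pi.sub_apply, Pi.zero_apply]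
    ring
  have e2 : B 0 ^ 2 + B 1 ^ 2 + B 2 ^ 2 = n := by
    rw [← h₂]
    simp only [distSq, dot3, Fin.sum_univ_three, Pi.sub_apply, Pi.zero_apply]
    ring
  have hnm : n = 2 * (A 0 * B 0 + A 1 * B 1 + A 2 * B 2) := by
    linear_combination e3 - e1 - e2
  have hnpos : 0 < n := by
    have hge : 0 ≤ n := by
      nlinarith [sq_nonneg (A 0 - B 0), sq_nonneg (A 1 - B 1), sq_nonneg (A 2 - B 2)]
    rcases eq_or_lt_of_le hge with h0 | h
    · exfalso
      have q0 : (A 0 - B 0) ^ 2 = 0 := le_antisymm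
        (by linarith [sq_nonneg (A 1 - B 1), sq_nonneg (A 2 - B 2)]) (sq_nonneg _)
      have q1 : (A 1 - B 1) ^ 2 = 0 := le_antisymm
        (by linarith [sq_nonneg (A 0 - B 0), sq_nonneg (A 2 - B 2)]) (sq_nonneg _)
      have q2 : (A 2 - B 2) ^ 2 = 0 := le_antisymm
        (by linarith [sq_nonneg (A 0 - B 0), sq_nonneg (A 1 - B 1)]) (sq_nonneg _)
      have r0 : A 0 = B 0 := by have h := sq_eq_zero_iff.mp q0; linarith
      have r1 : A 1 = B 1 := by have h := sq_eq_zero_iff.mp q1; linarith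
      have r2 : A 2 = B 2 := by have h := sq_eq_zero_iff.mp q2; linarith
      apply hAB
      funext i
      fin_cases i
      · exact r0
      · exact r1
      · exact r2
    · exact h
  obtain ⟨hc1, hc2, hc3⟩ := crossDvd a b c d (A 0) (A 1) (A 2) (B 0) (B 1) (B 2) n
    (A 0 * B 0 + A 1 * B 1 + A 2 * B 2) hdpos habc hplaneA hplaneB e1 e2 rfl hnm hnpos
  have hg : ∀ p : ℤ, Prime p → ¬(p ∣ a ∧ p ∣ b ∧ p ∣ c) := by
    rintro p hpp ⟨ha, hb, hc⟩
    have hg1 : p ∣ (Int.gcd a b : ℤ) := Int.dvd_coe_gcd ha hb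
    have hg2 : p ∣ (Int.gcd (Int.gcd a b) c : ℤ) := Int.dvd_coe_gcd hg1 hc
    rw [hgcd] at hg2
    exact hpp.not_unit (isUnit_of_dvd_one (by exact_mod_cast hg2))
  have hdvd : d ^ 2 ∣ n := combine a b c d n (A 0) (A 1) (A 2) hdpos
    (fun p hpp f => key f a b c d (A 0) (A 1) (A 2) p hpp habc (hg p hpp))
    e1 hnpos hc1 hc2 hc3 hplaneA
  have hodd : ¬ (2:ℤ) ∣ d := d_odd a b c d hgcd habc
  have hcop : IsCoprime (2 : ℤ) (d ^ 2) :=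
    ((Int.prime_two.coprime_iff_not_dvd).mpr hodd).pow_right
  have h2n : (2:ℤ) ∣ n := ⟨_, hnm⟩
  exact Int.le_of_dvd hnpos (hcop.mul_dvd h2n hdvd)
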